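/- The principal left ideal category L(OX_n) is isomorphic to the power set category P_o(X_n), via the functor F with F(Se_A) = A on objects and F(ρ(e_A, u, e_B)) = u restricted to A on morphisms; F is well-defined, functorial, inclusion-preserving, bijective on objects, and fully faithful. -/

import Mathlib

/-- The semigroup `OX_n` of order-preserving non-invertible transformations of
the chain `Fin n`, composed left to right. -/
def OX (n : ℕ) := {f : Fin n → Fin n // Monotone f ∧ ¬ Function.Surjective f}

instance (n : ℕ) : Mul (OX n) :=
  ⟨fun f g => ⟨g.1 ∘ f.1, g.2.1.comp f.2.1, fun h => g.2.2 h.of_comp⟩⟩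

/-- The principal left ideal `S e`. -/
def Lideal {n : ℕ} (e : OX n) : Set (OX n) := {x | ∃ s, x = s * e}

lemma OX.mul_val {n : ℕ} (f g : OX n) : (f * g).1 = g.1 ∘ f.1 := rfl

lemma OX.ext' {n : ℕ} {f g : OX n} (h : f.1 = g.1) : f = g := Subtype.ext h

/-- An idempotent fixes every point of its range. -/
lemma idem_fix {n : ℕ} {e : OX n} (he : e * e = e) {y : Fin n}
    (hy : y ∈ Set.range e.1) : e.1 y = y := by
  obtain ⟨z, rfl⟩ := hy
  have := congrArg Subtype.val he
  exact congrFun this z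

open Finset in
lemma exists_idem_OX {n : ℕ} (hn : 3 ≤ n) (A : Set (Fin n)) (hA : A.Nonempty)
    (hA2 : A ≠ Set.univ) : ∃ e : OX n, e * e = e ∧ Set.range e.1 = A := by
  classical
  set s : Finset (Fin n) := (Set.toFinite A).toFinset with hsdef
  have hmemA : ∀ x, x ∈ s ↔ x ∈ A := fun x => Set.Finite.mem_toFinset _
  have hsne : s.Nonempty := by obtain ⟨a, ha⟩ := hA; exact ⟨a, (hmemA a).2 ha⟩
  set m := s.min' hsne with hm
  set E : Fin n → Fin n := fun x =>
    if h : (s.filter (· ≤ x)).Nonempty then (s.filter (· ≤ x)).max' h else m with hE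
  have hmem : ∀ x, E x ∈ s := by
    intro x
    simp only [hE]
    split
    · exact mem_of_mem_filter _ (max'_mem _ ‹_›)
    · exact s.min'_mem hsne
  have hfix : ∀ a ∈ s, E a = a := by
    intro a ha
    have hne : (s.filter (· ≤ a)).Nonempty := ⟨a, mem_filter.2 ⟨ha, le_refl a⟩⟩
    simp only [hE, dif_pos hne]
    apply le_antisymm
    · exact (mem_filter.1 ((s.filter (· ≤ a)).max'_mem hne)).2
    · exact le_max' (s.filter (· ≤ a)) a (mem_filter.2 ⟨ha, le_rfl⟩)
  have hmono : Monotone E := by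
    intro x y hxy
    simp only [hE]
    by_cases hx : (s.filter (· ≤ x)).Nonempty
    · have hy : (s.filter (· ≤ y)).Nonempty := by
        obtain ⟨a, ha⟩ := hx
        obtain ⟨ha1, ha2⟩ := mem_filter.1 ha
        exact ⟨a, mem_filter.2 ⟨ha1, le_trans ha2 hxy⟩⟩
      rw [dif_pos hx, dif_pos hy]
      apply max'_le
      intro a ha
      obtain ⟨ha1, ha2⟩ := mem_filter.1 ha
      exact le_max' (s.filter (· ≤ y)) a (mem_filter.2 ⟨ha1, le_trans ha2 hxy⟩)
    · rw [dif_neg hx]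
      split
      · exact s.min'_le _ (mem_of_mem_filter _ (max'_mem _ ‹_›))
      · exact le_rfl
  have hrange : Set.range E = A := by
    apply Set.Subset.antisymm
    · rintro _ ⟨x, rfl⟩; exact (hmemA _).1 (hmem x)
    · intro a ha; exact ⟨a, hfix a ((hmemA a).2 ha)⟩
  have hnsurj : ¬ Function.Surjective E := by
    intro h
    obtain ⟨b, hb⟩ := Set.ne_univ_iff_exists_notMem A |>.1 hA2
    obtain ⟨x, hx⟩ := h b
    exact hb (hrange ▸ ⟨x, hx⟩)
  refine ⟨⟨E, hmono, hnsurj⟩, ?_, hrange⟩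
  apply OX.ext'
  funext x
  exact hfix (E x) (hmem x)


/-- The principal left ideal category `L(OX_n)` is isomorphic to the power set
category `P_o(X_n)` via `F : S e_A ↦ A`, `ρ(e_A,u,e_B) ↦ u|_A`: the object map
is well defined, injective (`S e_A = S e_B` iff `Im e_A = Im e_B`), surjective
onto proper nonempty subsets, inclusion-preserving (an order isomorphism), `F`
is fully faithful (every order-preserving `g : Im e_A → Im e_B` is `u|_{Im e_A}`
for a unique `u ∈ e_A S e_B`), and functorial (restriction of a composite is
the composite of restrictions). -/
theorem stmt14 (n : ℕ) (hn : 3 ≤ n) :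
    -- object map well defined and injective
    (∀ e f : OX n, e * e = e → f * f = f →
      (Lideal e = Lideal f ↔ Set.range e.1 = Set.range f.1)) ∧
    -- object map surjective onto proper nonempty subsets
    (∀ e : OX n, e * e = e → (Set.range e.1).Nonempty ∧ Set.range e.1 ≠ Set.univ) ∧
    (∀ A : Set (Fin n), A.Nonempty → A ≠ Set.univ →
      ∃ e : OX n, e * e = e ∧ Set.range e.1 = A) ∧
    -- inclusion preserving order isomorphism on objects
    (∀ e f : OX n, e * e = e → f * f = f →
      (Lideal e ⊆ Lideal f ↔ Set.range e.1 ⊆ Set.range f.1)) ∧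
    -- fully faithful
    (∀ eA eB : OX n, eA * eA = eA → eB * eB = eB →
      ∀ g : (Set.range eA.1 : Set (Fin n)) → (Set.range eB.1 : Set (Fin n)), Monotone g →
        ∃! u : OX n, eA * u = u ∧ u * eB = u ∧
          ∀ x : (Set.range eA.1 : Set (Fin n)), u.1 x.1 = (g x).1) ∧
    -- functorial: F(ρ(e_A,u,e_B) ρ(e_B,v,e_C)) = F(ρ(e_A,u,e_B)) F(ρ(e_B,v,e_C))
    (∀ eA eB eC : OX n, eA * eA = eA → eB * eB = eB → eC * eC = eC →
      ∀ u v : OX n, eA * u = u → u * eB = u → eB * v = v → v * eC = v →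
        ∀ x ∈ Set.range eA.1, (u * v).1 x = v.1 (u.1 x)) := by
  -- key: inclusion claim
  have incl : ∀ e f : OX n, e * e = e → f * f = f →
      (Lideal e ⊆ Lideal f ↔ Set.range e.1 ⊆ Set.range f.1) := by
    intro e f he hf
    constructor
    · intro h
      have he' : e ∈ Lideal e := ⟨e, he.symm⟩
      obtain ⟨s, hs⟩ := h he'
      rintro y ⟨x, rfl⟩
      have : e.1 x = f.1 (s.1 x) := congrFun (congrArg Subtype.val hs) x
      exact ⟨s.1 x, this.symm⟩
    · intro h x hx
      obtain ⟨s, rfl⟩ := hx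
      refine ⟨s * e, ?_⟩
      apply OX.ext'
      funext t
      show e.1 (s.1 t) = f.1 (e.1 (s.1 t))
      exact (idem_fix hf (h ⟨s.1 t, rfl⟩)).symm
  refine ⟨?_, ?_, fun A h1 h2 => exists_idem_OX hn A h1 h2, incl, ?_, ?_⟩
  · intro e f he hf
    constructor
    · intro h
      exact Set.Subset.antisymm ((incl e f he hf).1 h.subset)
        ((incl f e hf he).1 h.symm.subset)
    · intro h
      exact Set.Subset.antisymm ((incl e f he hf).2 h.subset)
        ((incl f e hf he).2 h.symm.subset)
  · intro e he
    refine ⟨⟨e.1 ⟨0, by omega⟩, ⟨0, by omega⟩, rfl⟩, ?_⟩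
    · intro h
      exact e.2.2 (Set.range_eq_univ.1 h)
  · intro eA eB heA heB g hg
    have hval : ∀ x, eA.1 x ∈ Set.range eA.1 := fun x => ⟨x, rfl⟩
    set U : Fin n → Fin n := fun x => (g ⟨eA.1 x, hval x⟩).1 with hU
    have hUmono : Monotone U := by
      intro x y hxy
      exact hg (Subtype.mk_le_mk.2 (eA.2.1 hxy))
    have hUnsurj : ¬ Function.Surjective U := by
      intro h
      obtain ⟨b, hb⟩ := Set.ne_univ_iff_exists_notMem (Set.range eB.1) |>.1
        (fun hu => eB.2.2 (Set.range_eq_univ.1 hu))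
      obtain ⟨x, hx⟩ := h b
      exact hb (hx ▸ (g ⟨eA.1 x, hval x⟩).2)
    refine ⟨⟨U, hUmono, hUnsurj⟩, ⟨?_, ?_, ?_⟩, ?_⟩
    · apply OX.ext'
      funext x
      show U (eA.1 x) = U x
      exact congrArg (fun t => (g t).1) (Subtype.ext (idem_fix heA (hval x)))
    · apply OX.ext'
      funext x
      exact idem_fix heB (g ⟨eA.1 x, hval x⟩).2
    · intro x
      exact congrArg (fun t => (g t).1) (Subtype.ext (idem_fix heA x.2))
    · rintro u ⟨h1, h2, h3⟩
      apply OX.ext'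
      funext x
      have e1 : u.1 (eA.1 x) = u.1 x := congrFun (congrArg Subtype.val h1) x
      have e2 : u.1 (eA.1 x) = (g ⟨eA.1 x, hval x⟩).1 := h3 ⟨eA.1 x, hval x⟩
      exact e1.symm.trans e2
  · intro eA eB eC _ _ _ u v _ _ _ _ x _
    rfl
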